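/- arXiv:2002.08876 — 2 statements merged into one kernel-verified Lean document; each statement's English description precedes it below -/
import Mathlib

section
/- Stability of sliding deformations under small perturbations. Let X ⊂ ℝ^n be open, let Γ ⊂ X be a Lipschitz neighborhood retract of X, let E ⊂ X be closed (relative to X), and let f be a sliding deformation of E in an open set U ⊂ X. Let W be an open set with W ⋐ E ∩ U (there exists a compact K with W ⊂ K ⊂ E ∩ U). Then there exists δ > 0 such that every Lipschitz map g : E → ℝ^n satisfying |g − f| ≤ δ, g(E ∩ Γ) ⊂ Γ and g = id on E ∖ W is a sliding deformation of E in U. -/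
open MeasureTheory Metric Set Filter
open scoped ENNReal NNReal Topology BigOperators

noncomputable section

namespace Paper

/-- Euclidean space ℝ^n. -/
abbrev Vn (n : ℕ) := EuclideanSpace ℝ (Fin n)

/-- The d-dimensional Hausdorff measure on ℝ^n. -/
abbrev HM (n d : ℕ) : Measure (Vn n) := Measure.hausdorffMeasure (d : ℝ)

/-- The scale radius `r_s(x)`; for `s = ∞` it equals the distance to the complement of `X`. -/
def scaleRadius {n : ℕ} (X : Set (Vn n)) (s : ℝ≥0∞) (x : Vn n) : ℝ≥0∞ :=
  if s = ⊤ then EMetric.infEdist x Xᶜ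
  else min (s / (1 + s) * EMetric.infEdist x Xᶜ) s

/-- Real version of the scale radius, for a finite scale `t`. -/
def scaleRadiusReal {n : ℕ} (X : Set (Vn n)) (t : ℝ) (x : Vn n) : ℝ :=
  (scaleRadius X (ENNReal.ofReal t) x).toReal

/-- `E` is relatively closed in `X`. -/
def RelClosedIn {n : ℕ} (X E : Set (Vn n)) : Prop :=
  ∃ C : Set (Vn n), IsClosed C ∧ E = C ∩ X

/-- `E` is `H^d` locally finite in `X`. -/
def HdLocallyFiniteOn (n d : ℕ) (X E : Set (Vn n)) : Prop :=
  ∀ x ∈ X, ∃ r : ℝ, 0 < r ∧ HM n d (E ∩ ball x r) < ⊤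

/-- The core `E^*` of `E` in `X`: the support of `H^d ⌞ E` in `X`. -/
def core (n d : ℕ) (X E : Set (Vn n)) : Set (Vn n) :=
  {x | x ∈ X ∧ ∀ r : ℝ, 0 < r → 0 < HM n d (E ∩ ball x r)}

/-- The support in `X` of a measure `μ`. -/
def suppIn {n : ℕ} (X : Set (Vn n)) (μ : Measure (Vn n)) : Set (Vn n) :=
  {x | x ∈ X ∧ ∀ r : ℝ, 0 < r → 0 < μ (ball x r)}

/-- A sliding deformation of `E` along the boundary `Γ` in the open set `U ⊆ X`. -/
structure IsSlidingDeformation {n : ℕ} (X Γ E U : Set (Vn n)) (f : Vn n → Vn n) : Prop where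
  lipschitz : ∃ K : ℝ≥0, LipschitzOnWith K f E
  mapsToX : ∀ x ∈ E, f x ∈ X
  homotopy : ∃ F : ℝ × Vn n → Vn n,
    ContinuousOn F (Set.Icc (0:ℝ) 1 ×ˢ E) ∧
    (∀ x ∈ E, F (0, x) = x) ∧
    (∀ x ∈ E, F (1, x) = f x) ∧
    (∀ t ∈ Set.Icc (0:ℝ) 1, ∀ x ∈ E, F (t, x) ∈ X) ∧
    (∀ t ∈ Set.Icc (0:ℝ) 1, ∀ x ∈ E ∩ Γ, F (t, x) ∈ Γ) ∧
    (∀ t ∈ Set.Icc (0:ℝ) 1, ∀ x ∈ E ∩ U, F (t, x) ∈ U) ∧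
    ∃ K : Set (Vn n), IsCompact K ∧ K ⊆ E ∩ U ∧
      ∀ t ∈ Set.Icc (0:ℝ) 1, ∀ x ∈ E \ K, F (t, x) = x

/-- A global sliding deformation in `U` is a sliding deformation of `X` itself. -/
def IsGlobalSlidingDeformation {n : ℕ} (X Γ U : Set (Vn n)) (f : Vn n → Vn n) : Prop :=
  IsSlidingDeformation X Γ X U f

/-- `E` is `(κ,h,s)`-quasiminimal with respect to the energy `I` along `Γ` in `X`. -/
def Quasiminimal {n : ℕ} (I : Measure (Vn n)) (X Γ E : Set (Vn n))
    (κ h : ℝ) (s : ℝ≥0∞) : Prop :=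
  ∀ (x : Vn n) (r : ℝ), 0 < r → ENNReal.ofReal r ≤ scaleRadius X s x → ball x r ⊆ X →
    ∀ f : Vn n → Vn n, IsSlidingDeformation X Γ E (ball x r) f →
      I {y | y ∈ E ∧ f y ≠ y} ≤
        ENNReal.ofReal κ * I (f '' {y | y ∈ E ∧ f y ≠ y}) +
        ENNReal.ofReal h * I (E ∩ ball x (h * r))

/-- Admissible energy in `X`, with comparability constant `Λ` (Definition of the paper). -/
structure AdmissibleEnergyWith {n : ℕ} (d : ℕ) (X : Set (Vn n)) (I : Measure (Vn n))
    (Λ : ℝ) : Prop where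
  one_le : 1 ≤ Λ
  le_hausdorff : ∀ A : Set (Vn n), A ⊆ X → I A ≤ ENNReal.ofReal Λ * HM n d A
  hausdorff_le : ∀ A : Set (Vn n), A ⊆ X → HM n d A ≤ ENNReal.ofReal Λ * I A
  tangentRatio : ∀ x ∈ X, ∀ W : AffineSubspace ℝ (Vn n), x ∈ W →
    Module.finrank ℝ W.direction = d →
    ∀ f : Vn n → Vn n, ContDiff ℝ 1 f → f x = x →
      (∀ v ∈ W.direction, fderiv ℝ f x v = v) →
      Tendsto (fun r : ℝ =>
          I (f '' ((W : Set (Vn n)) ∩ ball x r)) / I ((W : Set (Vn n)) ∩ ball x r))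
        (𝓝[>] 0) (𝓝 1)
  elliptic : ∀ x ∈ X, ∃ R : ℝ, 0 < R ∧ closedBall x R ⊆ X ∧ ∃ ε : ℝ → ℝ,
    (∀ r : ℝ, 0 < r → r ≤ R → 0 ≤ ε r) ∧ Tendsto ε (𝓝[>] 0) (𝓝 0) ∧
    ∀ r : ℝ, 0 < r → r ≤ R → ∀ W : AffineSubspace ℝ (Vn n), x ∈ W →
      Module.finrank ℝ W.direction = d →
      ∀ S : Set (Vn n), IsCompact S → S ⊆ closedBall x r → HM n d S < ⊤ →
        (¬ ∃ ψ : Vn n → Vn n, (∃ K : ℝ≥0, LipschitzOnWith K ψ (closedBall x r)) ∧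
            ψ '' closedBall x r ⊆ closedBall x r ∧
            (∀ y ∈ (W : Set (Vn n)) ∩ sphere x r, ψ y = y) ∧
            ψ '' S ⊆ (W : Set (Vn n)) ∩ sphere x r) →
        I ((W : Set (Vn n)) ∩ ball x r) ≤ I (S ∩ ball x r) + ENNReal.ofReal (ε r * r ^ d)

/-- Admissible energy in `X` (with an unspecified comparability constant). -/
def AdmissibleEnergy {n : ℕ} (d : ℕ) (X : Set (Vn n)) (I : Measure (Vn n)) : Prop :=
  ∃ Λ : ℝ, AdmissibleEnergyWith d X I Λ

/-- `E` is `H^d`-rectifiable: covered, up to an `H^d`-null set, by countably many Lipschitz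
images of subsets of `ℝ^d`. -/
def HdRectifiable (n d : ℕ) (E : Set (Vn n)) : Prop :=
  ∃ (f : ℕ → EuclideanSpace ℝ (Fin d) → Vn n) (A : ℕ → Set (EuclideanSpace ℝ (Fin d))),
    (∀ k, ∃ K : ℝ≥0, LipschitzOnWith K (f k) (A k)) ∧
    HM n d (E \ ⋃ k, f k '' A k) = 0

/-- Blow-up measures `(2r)^{-d} (H^d ⌞ F)(x + r(· - x))`. -/
def blowup (n d : ℕ) (F : Set (Vn n)) (x : Vn n) (r : ℝ) : Measure (Vn n) :=
  (ENNReal.ofReal (2 * r) ^ d)⁻¹ •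
    Measure.map (fun y => x + r⁻¹ • (y - x)) ((HM n d).restrict F)

/-- The linear subspace `W` is the direction of an approximate tangent `d`-plane of `F` at `x`:
the blow-up measures converge weakly to `H^d` restricted to the affine plane `x + W`. -/
def ApproxTangentAt (n d : ℕ) (F : Set (Vn n)) (x : Vn n) (W : Submodule ℝ (Vn n)) : Prop :=
  Module.finrank ℝ W = d ∧
  ∀ g : Vn n → ℝ, Continuous g → HasCompactSupport g →
    Tendsto (fun r : ℝ => ∫ y, g y ∂(blowup n d F x r)) (𝓝[>] 0)
      (𝓝 (∫ y, g y ∂((HM n d).restrict ((fun v => x + v) '' (W : Set (Vn n))))))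

/-- Weak convergence of a sequence of Radon measures, in the open set `X`. -/
def WeakTendstoIn {n : ℕ} (X : Set (Vn n)) (μ : ℕ → Measure (Vn n))
    (ν : Measure (Vn n)) : Prop :=
  ∀ g : Vn n → ℝ, Continuous g → HasCompactSupport g → tsupport g ⊆ X →
    Tendsto (fun i => ∫ y, g y ∂(μ i)) atTop (𝓝 (∫ y, g y ∂ν))

/-- Orthogonal projection onto a subspace, as a continuous linear map of the ambient space. -/
def projL {n : ℕ} (W : Submodule ℝ (Vn n)) : Vn n →L[ℝ] Vn n :=
  W.subtypeL.comp (W.orthogonalProjection)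

/-- `γ` is the Haar probability measure on the Grassmannian of `d`-planes of the subspace `W₀`
(realized as orthogonal projection operators): it is a probability measure carried by the set of
orthogonal projections onto `d`-dimensional subspaces of `W₀`, invariant under the conjugation
action of the orthogonal transformations preserving `W₀`. -/
def IsGrassHaar (n d : ℕ) (W₀ : Submodule ℝ (Vn n))
    (γ : Measure (Vn n →L[ℝ] Vn n)) : Prop :=
  IsProbabilityMeasure γ ∧
  γ {P | ¬ ∃ W : Submodule ℝ (Vn n), W ≤ W₀ ∧ Module.finrank ℝ W = d ∧ P = projL W} = 0 ∧
  ∀ g : Vn n ≃ₗᵢ[ℝ] Vn n, g '' (W₀ : Set (Vn n)) = (W₀ : Set (Vn n)) →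
    Measure.map (fun P => ((g.toContinuousLinearEquiv : Vn n →L[ℝ] Vn n).comp
        (P.comp ((g.symm.toContinuousLinearEquiv : Vn n →L[ℝ] Vn n))))) γ = γ

/-- `𝓘` is induced by a continuous integrand `i : X × G(d,n) → (0,∞)`. -/
def InducedByContinuousIntegrand {n : ℕ} (d : ℕ) (X : Set (Vn n))
    (I : Measure (Vn n)) : Prop :=
  ∃ i : Vn n × (Vn n →L[ℝ] Vn n) → ℝ,
    ContinuousOn i (X ×ˢ {P | ∃ W : Submodule ℝ (Vn n), Module.finrank ℝ W = d ∧ P = projL W}) ∧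
    (∀ p ∈ X ×ˢ {P | ∃ W : Submodule ℝ (Vn n), Module.finrank ℝ W = d ∧ P = projL W},
      0 < i p) ∧
    ∀ F : Set (Vn n), F ⊆ X → MeasurableSet F → HM n d F < ⊤ → HdRectifiable n d F →
      ∀ τ : Vn n → Submodule ℝ (Vn n),
        (∀ᵐ x ∂((HM n d).restrict F), ApproxTangentAt n d F x (τ x)) →
        I F = ∫⁻ x in F, ENNReal.ofReal (i (x, projL (τ x))) ∂(HM n d)

/-- A Lipschitz neighborhood retract of `X`. -/
def LipNbhdRetract {n : ℕ} (X Γ : Set (Vn n)) : Prop :=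
  ∃ O : Set (Vn n), IsOpen O ∧ Γ ⊆ O ∧ O ⊆ X ∧
    ∃ ρ : Vn n → Vn n, (∃ K : ℝ≥0, LipschitzOnWith K ρ O) ∧ ρ '' O ⊆ Γ ∧ ∀ x ∈ Γ, ρ x = x

/-- `Γ` is locally `C¹`-diffeomorphic to a cone. -/
def LocallyDiffeoToCone {n : ℕ} (X Γ : Set (Vn n)) : Prop :=
  ∀ x ∈ Γ, ∃ R : ℝ, 0 < R ∧ closedBall x R ⊆ X ∧
    ∃ O : Set (Vn n), IsOpen O ∧ x ∈ O ∧
    ∃ φ ψ : Vn n → Vn n,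
      ContDiffOn ℝ 1 φ (ball x R) ∧ ContDiffOn ℝ 1 ψ O ∧
      φ '' ball x R = O ∧ (∀ y ∈ ball x R, ψ (φ y) = y) ∧ (∀ z ∈ O, φ (ψ z) = z) ∧
      φ x = x ∧
      ∃ S : Set (Vn n), IsClosed S ∧ (∀ y ∈ S, ∀ t : ℝ, 0 ≤ t → x + t • (y - x) ∈ S) ∧
        φ '' (Γ ∩ ball x R) = S ∩ O

/-- A dyadic cell of the grid `𝓔_n(k)`. -/
def IsDyadicCell (n k : ℕ) (A : Set (Vn n)) : Prop :=
  ∃ (m : Fin n → ℤ) (α : Fin n → Bool),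
    A = {y : Vn n | ∀ i, y i ∈ Set.Icc ((m i : ℝ) * (2:ℝ) ^ (-(k:ℤ)))
        ((m i : ℝ) * (2:ℝ) ^ (-(k:ℤ)) + (if α i then (2:ℝ) ^ (-(k:ℤ)) else 0))}

/-- `φ` is `M`-bilipschitz on `S`. -/
def BilipschitzOnWith {n : ℕ} (M : ℝ) (φ : Vn n → Vn n) (S : Set (Vn n)) : Prop :=
  ∀ y ∈ S, ∀ z ∈ S, M⁻¹ * dist y z ≤ dist (φ y) (φ z) ∧ dist (φ y) (φ z) ≤ M * dist y z

/-- The grid axiom of Whitney subsets, with constant `M` and scale `t`. -/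
def WhitneyGridWith {n : ℕ} (X Γ : Set (Vn n)) (M t : ℝ) : Prop :=
  1 ≤ M ∧ 0 < t ∧
  ∀ x ∈ Γ, ∃ O : Set (Vn n), IsOpen O ∧
    ∃ φ : Vn n → Vn n, BilipschitzOnWith M φ (ball x (scaleRadiusReal X t x)) ∧
      φ '' ball x (scaleRadiusReal X t x) = O ∧
      ∃ k : ℕ, M⁻¹ * scaleRadiusReal X t x ≤ (2:ℝ) ^ (-(k:ℤ)) ∧
        ∃ S : Set (Set (Vn n)), (∀ A ∈ S, IsDyadicCell n k A) ∧
          φ '' (Γ ∩ ball x (scaleRadiusReal X t x)) = O ∩ ⋃₀ S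

/-- A Whitney subset of `X`, with explicit constants `M`, `t`. -/
def WhitneySubsetWith {n : ℕ} (X Γ : Set (Vn n)) (M t : ℝ) : Prop :=
  RelClosedIn X Γ ∧ LipNbhdRetract X Γ ∧ LocallyDiffeoToCone X Γ ∧ WhitneyGridWith X Γ M t

/-- A Whitney subset of `X`. -/
def WhitneySubset {n : ℕ} (X Γ : Set (Vn n)) : Prop :=
  ∃ M t : ℝ, WhitneySubsetWith X Γ M t

/-! Cells, complexes and charts. -/

/-- The reference cells `∏ [0, α_i]`, `α ∈ {-1,0,1}^n`, of the canonical `n`-complex `E_n`. -/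
def refCell (n : ℕ) (α : Fin n → Fin 3) : Set (Vn n) :=
  {y | ∀ i, y i ∈ Set.Icc (min 0 (![(-1:ℝ), 0, 1] (α i))) (max 0 (![(-1:ℝ), 0, 1] (α i)))}

/-- A similarity of `ℝ^n`. -/
def IsSimilarity {n : ℕ} (f : Vn n → Vn n) : Prop :=
  ∃ r : ℝ, 0 < r ∧ ∀ x y, dist (f x) (f y) = r * dist x y

/-- A cell of `ℝ^n`: a face of a cube, i.e. the image of a reference cell under a similarity. -/
def IsCell (n : ℕ) (A : Set (Vn n)) : Prop :=
  ∃ (f : Vn n → Vn n) (α : Fin n → Fin 3), IsSimilarity f ∧ A = f '' refCell n α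

/-- Interior of a cell relative to its affine span. -/
def cellInt {n : ℕ} (A : Set (Vn n)) : Set (Vn n) :=
  {x | x ∈ A ∧ ∃ ε : ℝ, 0 < ε ∧ ∀ y ∈ (affineSpan ℝ A : Set (Vn n)), dist y x < ε → y ∈ A}

/-- Boundary of a cell relative to its affine span. -/
def cellBry {n : ℕ} (A : Set (Vn n)) : Set (Vn n) := A \ cellInt A

/-- Dimension of a cell: the dimension of its affine span. -/
def cellDim {n : ℕ} (A : Set (Vn n)) : ℕ :=
  Module.finrank ℝ (affineSpan ℝ A).direction

/-- A complex of cells. -/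
def IsComplex {n : ℕ} (K : Set (Set (Vn n))) : Prop :=
  (∀ A ∈ K, IsCell n A) ∧
  (∀ A ∈ K, ∀ B ∈ K, A ≠ B → cellInt A ∩ cellInt B = ∅) ∧
  (∀ x ∈ ⋃₀ K, ∃ U : Set (Vn n), IsOpen U ∧ x ∈ U ∧ {A ∈ K | (A ∩ U).Nonempty}.Finite) ∧
  (∀ A ∈ K, ∃ U : Set (Vn n), IsOpen U ∧ cellInt A ⊆ U ∧
      U ∩ ⋃₀ K ⊆ ⋃ B ∈ {B ∈ K | A ⊆ B}, cellInt B)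

/-- The set `V_A = ⋃ {int B | B ∈ K, A ⊆ B}`. -/
def cellNbhd {n : ℕ} (K : Set (Set (Vn n))) (A : Set (Vn n)) : Set (Vn n) :=
  ⋃ B ∈ {B ∈ K | A ⊆ B}, cellInt B

/-- An `n`-chart: the image of the canonical `n`-complex `E_n` under a similarity. -/
def IsChart {n : ℕ} (K : Set (Set (Vn n))) : Prop :=
  ∃ f : Vn n → Vn n, IsSimilarity f ∧ K = {A | ∃ α : Fin n → Fin 3, A = f '' refCell n α}

/-- A system of `n`-charts. -/
def IsChartSystem {n : ℕ} {ι : Type} (K : ι → Set (Set (Vn n))) : Prop :=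
  (∀ a, IsChart (K a)) ∧
  (∀ A ∈ ⋃ a, K a, ∀ B ∈ ⋃ a, K a, (cellInt A ∩ cellInt B).Nonempty →
      cellInt A ⊆ cellInt B ∨ cellInt B ⊆ cellInt A) ∧
  (∀ x ∈ ⋃ a, ⋃₀ (K a), ∃ U : Set (Vn n), IsOpen U ∧ x ∈ U ∧
      ∃ S : Set (Set (Vn n)), S.Finite ∧ S ⊆ ⋃ a, K a ∧
        ∀ A ∈ ⋃ a, K a, (A ∩ (U ∩ ⋃ a, ⋃₀ (K a))).Nonempty →
          ∃ B ∈ S, cellInt A ⊆ cellInt B)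

/-- The limit of a system of `n`-charts: the collection of its maximal cells. -/
def systemLimit {n : ℕ} {ι : Type} (K : ι → Set (Set (Vn n))) : Set (Set (Vn n)) :=
  {A | A ∈ ⋃ a, K a ∧ ∀ B ∈ ⋃ a, K a, (cellInt A ∩ cellInt B).Nonempty → cellInt B ⊆ cellInt A}

/-- An `n`-complex: the limit of a system of `n`-charts. -/
def IsNComplex {n : ℕ} (K : Set (Set (Vn n))) : Prop :=
  ∃ (ι : Type) (Kα : ι → Set (Set (Vn n))), IsChartSystem Kα ∧ K = systemLimit Kα

/-- A subcomplex of `K`. -/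
def IsSubcomplex {n : ℕ} (K L : Set (Set (Vn n))) : Prop :=
  L ⊆ K ∧ ∀ A ∈ L, ∀ B ∈ K, A ⊆ B → B ∈ L

/-- The rigid open set `U(L)` induced by a set of cells. -/
def rigidOpen {n : ℕ} (L : Set (Set (Vn n))) : Set (Vn n) :=
  ⋃ A ∈ L, cellInt A

/-- `φ` is locally Lipschitz on `S`. -/
def LocallyLipschitzOn {n : ℕ} (S : Set (Vn n)) (φ : Vn n → Vn n) : Prop :=
  ∀ x ∈ S, ∃ U : Set (Vn n), IsOpen U ∧ x ∈ U ∧ ∃ c : ℝ≥0, LipschitzOnWith c φ (U ∩ S)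

/-- The union of interiors of cells of dimension `> d`. -/
def highSkel {n : ℕ} (K : Set (Set (Vn n))) (d : ℕ) : Set (Vn n) :=
  ⋃ A ∈ {A ∈ K | d < cellDim A}, cellInt A

/-- Upper Lebesgue integral (infimum of integrals of measurable majorants). -/
def upperLintegral {α : Type*} [MeasurableSpace α] (μ : Measure α) (s : Set α)
    (f : α → ℝ≥0∞) : ℝ≥0∞ :=
  ⨅ (g : α → ℝ≥0∞) (_ : Measurable g) (_ : ∀ x, f x ≤ g x), ∫⁻ x in s, g x ∂μ

/-- The norm of a linear map restricted to a subset `S`. -/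
def opNormOn {n : ℕ} (u : Vn n →L[ℝ] Vn n) (S : Set (Vn n)) : ℝ :=
  sSup ((fun x => ‖u x‖) '' {x ∈ S | ‖x‖ ≤ 1})


set_option maxHeartbeats 1000000 in
/-- **Stability of sliding deformations under small perturbations.** -/
theorem sliding_deformation_stability (n : ℕ) (X : Set (Vn n)) (hX : IsOpen X)
    (Γ : Set (Vn n)) (hΓc : RelClosedIn X Γ) (hΓ : LipNbhdRetract X Γ)
    (E : Set (Vn n)) (hE : RelClosedIn X E)
    (U : Set (Vn n)) (hU : IsOpen U) (hUX : U ⊆ X)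
    (f : Vn n → Vn n) (hf : IsSlidingDeformation X Γ E U f)
    (W : Set (Vn n)) (hWopen : ∃ W₀ : Set (Vn n), IsOpen W₀ ∧ W = W₀ ∩ E)
    (hWcc : ∃ K : Set (Vn n), IsCompact K ∧ W ⊆ K ∧ K ⊆ E ∩ U) :
    ∃ δ : ℝ, 0 < δ ∧
      ∀ g : Vn n → Vn n, (∃ K : ℝ≥0, LipschitzOnWith K g E) →
        (∀ x ∈ E, dist (g x) (f x) ≤ δ) →
        (∀ x ∈ E ∩ Γ, g x ∈ Γ) →
        (∀ x ∈ E \ W, g x = x) →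
        IsSlidingDeformation X Γ E U g := by
  classical
  obtain ⟨O, hOopen, hΓO, hOX, ρ, ⟨Kρ, hρlip⟩, hρΓ, hρid⟩ := hΓ
  obtain ⟨CΓ, hCΓ, hΓeq⟩ := hΓc
  obtain ⟨CE, hCE, hEeq⟩ := hE
  have hEX : E ⊆ X := by rw [hEeq]; exact Set.inter_subset_right
  obtain ⟨⟨Kf, hflip⟩, hfXmem, Fh, hFcont, hF0, hF1, hFX, hFΓ, hFU, KF, hKFc, hKFsub, hFfix⟩ := hf
  obtain ⟨KW, hKWc, hWKW, hKWEU⟩ := hWcc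
  set L : Set (Vn n) := KF ∪ KW with hLdef
  have hLc : IsCompact L := hKFc.union hKWc
  have hLEU : L ⊆ E ∩ U := Set.union_subset hKFsub hKWEU
  have hLE : L ⊆ E := hLEU.trans Set.inter_subset_left
  have hfcont : ContinuousOn f E := hflip.continuousOn
  have h01 : (1:ℝ) ∈ Set.Icc (0:ℝ) 1 := ⟨zero_le_one, le_refl 1⟩
  have hfmem : ∀ x ∈ E ∩ U, f x ∈ U := by
    intro x hx
    have := hFU 1 h01 x hx; rwa [hF1 x hx.1] at this
  have hfΓ : ∀ x ∈ E ∩ Γ, f x ∈ Γ := by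
    intro x hx
    have := hFΓ 1 h01 x hx; rwa [hF1 x hx.1] at this
  have hfLc : IsCompact (f '' L) := hLc.image_of_continuousOn (hfcont.mono hLE)
  have hfLU : f '' L ⊆ U := by rintro _ ⟨x, hx, rfl⟩; exact hfmem x (hLEU hx)
  obtain ⟨ε₁, hε₁, hε₁U⟩ := hfLc.exists_cthickening_subset_open hU hfLU
  have hLΓc : IsCompact (L ∩ Γ) := by
    have hh : L ∩ Γ = L ∩ CΓ := by
      rw [hΓeq]; ext y; constructor
      · rintro ⟨h1, h2, _⟩; exact ⟨h1, h2⟩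
      · rintro ⟨h1, h2⟩; exact ⟨h1, h2, hEX (hLE h1)⟩
    rw [hh]; exact hLc.inter_right hCΓ
  set Q : Set (Vn n) := f '' (L ∩ Γ) with hQdef
  have hQc : IsCompact Q := hLΓc.image_of_continuousOn
    (hfcont.mono (Set.inter_subset_left.trans hLE))
  have hQΓ : Q ⊆ Γ := by rintro _ ⟨x, hx, rfl⟩; exact hfΓ x ⟨hLE hx.1, hx.2⟩
  have hQOU : Q ⊆ O ∩ U := by
    rintro _ ⟨x, hx, rfl⟩
    exact ⟨hΓO (hfΓ x ⟨hLE hx.1, hx.2⟩), hfmem x (hLEU hx.1)⟩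
  obtain ⟨δ₂, hδ₂, hδ₂sub⟩ := hQc.exists_cthickening_subset_open (hOopen.inter hU) hQOU
  have hKρ0 : (0:ℝ) ≤ (Kρ:ℝ) := Kρ.coe_nonneg
  set c : ℝ := 2 * ((Kρ:ℝ) + 2) with hcdef
  have hc2 : (2:ℝ) ≤ c := by rw [hcdef]; nlinarith
  have hc0 : (0:ℝ) < c := by linarith
  set δ'' : ℝ := min (δ₂ / c) (ε₁ / (2*c)) with hdpdef
  have hδ''pos : 0 < δ'' := lt_min (div_pos hδ₂ hc0) (div_pos hε₁ (by linarith))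
  have hcδ''δ₂ : c * δ'' ≤ δ₂ := by
    have h1 : δ'' ≤ δ₂ / c := min_le_left _ _
    calc c * δ'' ≤ c * (δ₂ / c) := by nlinarith
      _ = δ₂ := by field_simp
  have hcδ''ε₁ : c * δ'' ≤ ε₁ / 2 := by
    have h1 : δ'' ≤ ε₁ / (2*c) := min_le_right _ _
    calc c * δ'' ≤ c * (ε₁ / (2*c)) := by nlinarith
      _ = ε₁ / 2 := by field_simp
  have h2δ''δ₂ : 2 * δ'' ≤ δ₂ := le_trans (by nlinarith) hcδ''δ₂
  have hδ''δ₂ : δ'' ≤ δ₂ := by nlinarith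
  set δ : ℝ := min δ'' (ε₁ / 2) with hδdef
  have hδpos : 0 < δ := lt_min hδ''pos (by linarith)
  have hδδ'' : δ ≤ δ'' := min_le_left _ _
  have hδε₁ : δ ≤ ε₁ / 2 := min_le_right _ _
  refine ⟨δ, hδpos, ?_⟩
  intro g hglip hgdist hgΓ hgfix
  obtain ⟨Kg, hgl⟩ := hglip
  -- the cutoff function and the correction map
  set lam : Vn n → ℝ := fun y =>
    if Q.Nonempty then max 0 (min 1 (2 - Metric.infDist y Q / δ'')) else 0 with hlamdef
  have hlam01 : ∀ y, 0 ≤ lam y ∧ lam y ≤ 1 := by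
    intro y
    by_cases hQ : Q.Nonempty
    · simp only [hlamdef, if_pos hQ]
      exact ⟨le_max_left _ _, max_le zero_le_one (min_le_left _ _)⟩
    · simp [hlamdef, hQ]
  have hlam_ne : ∀ y, lam y ≠ 0 →
      ∃ q ∈ Q, dist y q ≤ 2*δ'' ∧ ‖ρ y - y‖ ≤ ((Kρ:ℝ)+1)*(2*δ'') := by
    intro y hy
    have hQ : Q.Nonempty := by
      by_contra h; exact hy (by simp [hlamdef, h])
    have hd : Metric.infDist y Q < 2*δ'' := by
      by_contra hcon
      push_neg at hcon
      apply hy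
      simp only [hlamdef, if_pos hQ]
      rw [max_eq_left]
      refine (min_le_right _ _).trans ?_
      rw [sub_nonpos, le_div_iff₀ hδ''pos]
      linarith
    obtain ⟨q, hqQ, hq⟩ := hQc.exists_infDist_eq_dist hQ y
    have hdq : dist y q ≤ 2*δ'' := by rw [← hq]; linarith
    refine ⟨q, hqQ, hdq, ?_⟩
    have hyO : y ∈ O :=
      (hδ₂sub (Metric.mem_cthickening_of_dist_le y q δ₂ Q hqQ (hdq.trans h2δ''δ₂))).1
    have hqO : q ∈ O := hΓO (hQΓ hqQ)
    have hρq : ρ q = q := hρid q (hQΓ hqQ)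
    have hlipd := hρlip.dist_le_mul y hyO q hqO
    calc ‖ρ y - y‖ = dist (ρ y) y := (dist_eq_norm _ _).symm
      _ ≤ dist (ρ y) (ρ q) + dist (ρ q) y := dist_triangle _ _ _
      _ = dist (ρ y) (ρ q) + dist y q := by rw [hρq]; rw [dist_comm q y]
      _ ≤ (Kρ:ℝ) * dist y q + dist y q := by linarith
      _ ≤ ((Kρ:ℝ)+1)*(2*δ'') := by nlinarith [dist_nonneg (x := y) (y := q)]
  set hcorr : Vn n → Vn n := fun y => lam y • (ρ y - y) with hcorrdef
  have hcorr_norm : ∀ y, ‖hcorr y‖ ≤ ((Kρ:ℝ)+1)*(2*δ'') := by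
    intro y
    by_cases h : lam y = 0
    · simp only [hcorrdef, h, zero_smul, norm_zero]
      positivity
    · obtain ⟨q, hq, hdq, hb⟩ := hlam_ne y h
      calc ‖hcorr y‖ = |lam y| * ‖ρ y - y‖ := by
            rw [hcorrdef]; rw [norm_smul, Real.norm_eq_abs]
        _ ≤ 1 * (((Kρ:ℝ)+1)*(2*δ'')) := by
            apply mul_le_mul _ hb (norm_nonneg _) zero_le_one
            rw [abs_of_nonneg (hlam01 y).1]; exact (hlam01 y).2
        _ = _ := one_mul _
  have hcorr_Γ : ∀ y ∈ Γ, hcorr y = 0 := by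
    intro y hy; simp [hcorrdef, hρid y hy]
  have hcorr_cthick : ∀ y, hcorr y ≠ 0 → y ∈ Metric.cthickening (2*δ'') Q := by
    intro y hy
    have hl : lam y ≠ 0 := by
      intro h; exact hy (by simp [hcorrdef, h])
    obtain ⟨q, hq, hdq, -⟩ := hlam_ne y hl
    exact Metric.mem_cthickening_of_dist_le y q _ Q hq hdq
  have hlam_one : ∀ y, Q.Nonempty → Metric.infDist y Q ≤ δ'' → lam y = 1 := by
    intro y hQ hd
    simp only [hlamdef, if_pos hQ]
    have h2 : (1:ℝ) ≤ 2 - Metric.infDist y Q / δ'' := by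
      have hdd : Metric.infDist y Q / δ'' ≤ 1 := by
        rw [div_le_one hδ''pos]; exact hd
      linarith
    rw [min_eq_left h2, max_eq_right zero_le_one]
  have hlam_cont : Continuous lam := by
    by_cases hQ : Q.Nonempty
    · simp only [hlamdef, if_pos hQ]
      have hcont : Continuous fun y : Vn n => 2 - Metric.infDist y Q / δ'' :=
        continuous_const.sub ((Metric.continuous_infDist_pt Q).div_const _)
      exact continuous_const.max (continuous_const.min hcont)
    · simp only [hlamdef, if_neg hQ]; exact continuous_const
  have hcorr_cont : Continuous hcorr := by
    rw [continuous_iff_continuousAt]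
    intro y
    by_cases hyO : y ∈ O
    · have hρc : ContinuousAt ρ y := hρlip.continuousOn.continuousAt (hOopen.mem_nhds hyO)
      simp only [hcorrdef]
      exact hlam_cont.continuousAt.smul (hρc.sub continuousAt_id)
    · have hyV : y ∈ (Metric.cthickening (2*δ'') Q)ᶜ := by
        intro hmem
        exact hyO ((hδ₂sub (Metric.cthickening_mono h2δ''δ₂ Q hmem)).1)
      have hopen : IsOpen (Metric.cthickening (2*δ'') Q)ᶜ :=
        (Metric.isClosed_cthickening).isOpen_compl
      have hev : hcorr =ᶠ[nhds y] fun _ => (0 : Vn n) := by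
        filter_upwards [hopen.mem_nhds hyV] with z hz
        by_contra h
        exact hz (hcorr_cthick z h)
      exact (continuousAt_congr hev).mpr continuousAt_const
  -- the homotopy
  set cl : ℝ → ℝ := fun s => max 0 (min 1 s) with hcldef
  have hcl_mem : ∀ s, cl s ∈ Set.Icc (0:ℝ) 1 := fun s =>
    ⟨le_max_left _ _, max_le zero_le_one (min_le_left _ _)⟩
  set Y : ℝ × Vn n → Vn n := fun p =>
    (1 - cl (4*p.1 - 2)) • Fh (cl (4*p.1), p.2) + cl (4*p.1 - 2) • g p.2 with hYdef
  set m : ℝ → ℝ := fun t => max 0 (min 1 (min (4*t - 1) (4 - 4*t))) with hmdef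
  set G : ℝ × Vn n → Vn n := fun p => Y p + m p.1 • hcorr (Y p) with hGdef
  set Ktot : Set (Vn n) := L ∪ (E ∩ Metric.cthickening δ₂ Q) with hKtdef
  have hTsub : Metric.cthickening δ₂ Q ⊆ U := fun y hy => (hδ₂sub hy).2
  have hKtc : IsCompact Ktot := by
    apply hLc.union
    have hEq : E ∩ Metric.cthickening δ₂ Q = CE ∩ Metric.cthickening δ₂ Q := by
      rw [hEeq]; ext y
      constructor
      · rintro ⟨⟨h1, _⟩, h3⟩; exact ⟨h1, h3⟩
      · rintro ⟨h1, h3⟩; exact ⟨⟨h1, hUX (hTsub h3)⟩, h3⟩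
    rw [hEq]
    exact (hQc.cthickening).inter_left hCE
  have hKtsub : Ktot ⊆ E ∩ U := by
    apply Set.union_subset hLEU
    rintro y ⟨h1, h2⟩; exact ⟨h1, hTsub h2⟩
  -- master pointwise lemma
  have master : ∀ t ∈ Set.Icc (0:ℝ) 1, ∀ x ∈ E,
      G (t, x) ∈ X ∧ (x ∈ Γ → G (t, x) ∈ Γ) ∧ (x ∈ U → G (t, x) ∈ U) ∧
      (x ∉ Ktot → G (t, x) = x) := by
    intro t ht x hx
    rcases le_or_gt (4*t) 1 with h4 | h4
    · have hu : cl (4*t - 2) = 0 := max_eq_left ((min_le_right 1 _).trans (by linarith))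
      have hm0 : m t = 0 :=
        max_eq_left ((min_le_right _ _).trans ((min_le_left _ _).trans (by linarith)))
      have hGeq : G (t, x) = Fh (cl (4*t), x) := by
        simp [hGdef, hYdef, hu, hm0]
      have hclm := hcl_mem (4*t)
      refine ⟨?_, ?_, ?_, ?_⟩
      · rw [hGeq]; exact hFX _ hclm x hx
      · intro hxΓ; rw [hGeq]; exact hFΓ _ hclm x ⟨hx, hxΓ⟩
      · intro hxU; rw [hGeq]; exact hFU _ hclm x ⟨hx, hxU⟩
      · intro hxK
        have hxKF : x ∉ KF := fun h => hxK (Or.inl (Or.inl h))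
        rw [hGeq]; exact hFfix _ hclm x ⟨hx, hxKF⟩
    · have hcl1 : cl (4*t) = 1 := by
        simp only [hcldef]
        rw [min_eq_left h4.le, max_eq_right zero_le_one]
      have hu01 := hcl_mem (4*t - 2)
      have hm01 : 0 ≤ m t ∧ m t ≤ 1 :=
        ⟨le_max_left _ _, max_le zero_le_one (min_le_left _ _)⟩
      have hfx1 : Fh (1, x) = f x := hF1 x hx
      have hYeq : Y (t, x) = (1 - cl (4*t - 2)) • f x + cl (4*t - 2) • g x := by
        simp only [hYdef, hcl1]
        rw [hfx1]
      have hdistY : dist (Y (t, x)) (f x) ≤ δ := by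
        have hsub : Y (t, x) - f x = cl (4*t - 2) • (g x - f x) := by
          rw [hYeq]; module
        rw [dist_eq_norm, hsub, norm_smul, Real.norm_eq_abs, abs_of_nonneg hu01.1]
        calc cl (4*t - 2) * ‖g x - f x‖ ≤ 1 * ‖g x - f x‖ :=
              mul_le_mul_of_nonneg_right hu01.2 (norm_nonneg _)
          _ = dist (g x) (f x) := by rw [one_mul, dist_eq_norm]
          _ ≤ δ := hgdist x hx
      have hGY : dist (G (t, x)) (Y (t, x)) ≤ ((Kρ:ℝ)+1)*(2*δ'') := by
        have hsub : G (t, x) - Y (t, x) = m t • hcorr (Y (t, x)) := by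
          simp [hGdef]
        rw [dist_eq_norm, hsub, norm_smul, Real.norm_eq_abs, abs_of_nonneg hm01.1]
        calc m t * ‖hcorr (Y (t, x))‖ ≤ 1 * ‖hcorr (Y (t, x))‖ :=
              mul_le_mul_of_nonneg_right hm01.2 (norm_nonneg _)
          _ ≤ _ := by rw [one_mul]; exact hcorr_norm _
      by_cases hxL : x ∈ L
      · have hGmem : G (t, x) ∈ Metric.cthickening ε₁ (f '' L) := by
          refine Metric.mem_cthickening_of_dist_le (G (t, x)) (f x) ε₁ (f '' L)
            ⟨x, hxL, rfl⟩ ?_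
          calc dist (G (t, x)) (f x)
              ≤ dist (G (t, x)) (Y (t, x)) + dist (Y (t, x)) (f x) := dist_triangle _ _ _
            _ ≤ ((Kρ:ℝ)+1)*(2*δ'') + δ := add_le_add hGY hdistY
            _ ≤ ε₁ := by nlinarith [hδ''pos.le]
        have hGU : G (t, x) ∈ U := hε₁U hGmem
        refine ⟨hUX hGU, ?_, fun _ => hGU, fun hxK => absurd (Or.inl hxL) hxK⟩
        intro hxΓ
        by_cases hYΓ : Y (t, x) ∈ Γ
        · have hGy : G (t, x) = Y (t, x) := by
            simp [hGdef, hcorr_Γ _ hYΓ]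
          rw [hGy]; exact hYΓ
        · have hfxΓ : f x ∈ Γ := hfΓ x ⟨hx, hxΓ⟩
          have hu0 : cl (4*t - 2) ≠ 0 := by
            intro h; apply hYΓ; rw [hYeq, h]; simpa using hfxΓ
          have hu1 : cl (4*t - 2) ≠ 1 := by
            intro h; apply hYΓ; rw [hYeq, h]; simpa using hgΓ x ⟨hx, hxΓ⟩
          have h42 : 0 < 4*t - 2 := by
            by_contra hc; push_neg at hc
            exact hu0 (max_eq_left ((min_le_right _ _).trans hc))
          have h43 : 4*t - 2 < 1 := by
            by_contra hc; push_neg at hc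
            apply hu1
            simp only [hcldef]
            rw [min_eq_left hc, max_eq_right zero_le_one]
          have hmt1 : m t = 1 := by
            simp only [hmdef]
            rw [min_eq_left (le_min (by linarith) (by linarith)),
              max_eq_right zero_le_one]
          have hQne : Q.Nonempty := ⟨f x, x, ⟨hxL, hxΓ⟩, rfl⟩
          have hdY : Metric.infDist (Y (t, x)) Q ≤ δ'' := by
            have hle : Metric.infDist (Y (t, x)) Q ≤ dist (Y (t, x)) (f x) :=
              Metric.infDist_le_dist_of_mem ⟨x, ⟨hxL, hxΓ⟩, rfl⟩
            exact hle.trans (hdistY.trans hδδ'')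
          have hlam1 : lam (Y (t, x)) = 1 := hlam_one _ hQne hdY
          have hYO : Y (t, x) ∈ O := by
            obtain ⟨q, hqQ, hq⟩ := hQc.exists_infDist_eq_dist hQne (Y (t, x))
            have hdd : dist (Y (t, x)) q ≤ δ₂ := by
              rw [← hq]; exact hdY.trans hδ''δ₂
            exact (hδ₂sub (Metric.mem_cthickening_of_dist_le _ q δ₂ Q hqQ hdd)).1
          have hGeq2 : G (t, x) = ρ (Y (t, x)) := by
            simp [hGdef, hcorrdef, hmt1, hlam1]
          rw [hGeq2]; exact hρΓ ⟨Y (t, x), hYO, rfl⟩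
      · have hxKF : x ∉ KF := fun h => hxL (Or.inl h)
        have hxW : x ∉ W := fun h => hxL (Or.inr (hWKW h))
        have hfxx : f x = x := by
          rw [← hF1 x hx]; exact hFfix 1 h01 x ⟨hx, hxKF⟩
        have hgxx : g x = x := hgfix x ⟨hx, hxW⟩
        have hYx : Y (t, x) = x := by rw [hYeq, hfxx, hgxx]; module
        have hΓcase : x ∈ Γ → G (t, x) ∈ Γ := by
          intro hxΓ
          have hGx : G (t, x) = x := by
            simp [hGdef, hYx, hcorr_Γ x hxΓ]
          rw [hGx]; exact hxΓ
        by_cases hl : hcorr x = 0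
        · have hGx : G (t, x) = x := by simp [hGdef, hYx, hl]
          exact ⟨by rw [hGx]; exact hEX hx, hΓcase,
            fun hxU => by rw [hGx]; exact hxU, fun _ => hGx⟩
        · have hxth := hcorr_cthick x hl
          have hlne : lam x ≠ 0 := by
            intro h; exact hl (by simp [hcorrdef, h])
          obtain ⟨q, hqQ, hdq, -⟩ := hlam_ne x hlne
          have hGnear : dist (G (t, x)) q ≤ δ₂ := by
            have hGx2 : dist (G (t, x)) x ≤ ((Kρ:ℝ)+1)*(2*δ'') := by
              have := hGY; rwa [hYx] at this
            calc dist (G (t, x)) q ≤ dist (G (t, x)) x + dist x q := dist_triangle _ _ _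
              _ ≤ ((Kρ:ℝ)+1)*(2*δ'') + 2*δ'' := add_le_add hGx2 hdq
              _ ≤ δ₂ := by nlinarith [hδ''pos.le]
          have hGmem : G (t, x) ∈ O ∩ U :=
            hδ₂sub (Metric.mem_cthickening_of_dist_le _ q δ₂ Q hqQ hGnear)
          refine ⟨hUX hGmem.2, hΓcase, fun _ => hGmem.2, ?_⟩
          intro hxK
          exact absurd (Or.inr ⟨hx, Metric.cthickening_mono h2δ''δ₂ Q hxth⟩) hxK
  -- endpoints
  have hG0 : ∀ x ∈ E, G (0, x) = x := by
    intro x hx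
    have hc1 : cl (0:ℝ) = 0 := by norm_num [hcldef]
    have hc2' : cl (-2:ℝ) = 0 := by norm_num [hcldef]
    have hm0 : m 0 = 0 := by norm_num [hmdef]
    simp [hGdef, hYdef, hc1, hc2', hm0, hF0 x hx]
  have hG1 : ∀ x ∈ E, G (1, x) = g x := by
    intro x hx
    have hc1 : cl (4:ℝ) = 1 := by norm_num [hcldef]
    have hc2' : cl ((4:ℝ) - 2) = 1 := by norm_num [hcldef]
    have hm0 : m 1 = 0 := by norm_num [hmdef]
    simp [hGdef, hYdef, hc1, hc2', hm0]
  -- continuity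
  have hclc : Continuous cl := continuous_const.max (continuous_const.min continuous_id)
  have hYcont : ContinuousOn Y (Set.Icc (0:ℝ) 1 ×ˢ E) := by
    have h1 : ContinuousOn (fun p : ℝ × Vn n => Fh (cl (4*p.1), p.2))
        (Set.Icc (0:ℝ) 1 ×ˢ E) := by
      apply hFcont.comp
      · exact ((hclc.comp (continuous_const.mul continuous_fst)).prodMk
          continuous_snd).continuousOn
      · intro p hp
        exact ⟨hcl_mem _, hp.2⟩
    have h2 : ContinuousOn (fun p : ℝ × Vn n => g p.2) (Set.Icc (0:ℝ) 1 ×ˢ E) :=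
      hgl.continuousOn.comp continuous_snd.continuousOn (fun p hp => hp.2)
    have hs1 : Continuous fun p : ℝ × Vn n => 1 - cl (4*p.1 - 2) :=
      continuous_const.sub (hclc.comp ((continuous_const.mul continuous_fst).sub
        continuous_const))
    have hs2 : Continuous fun p : ℝ × Vn n => cl (4*p.1 - 2) :=
      hclc.comp ((continuous_const.mul continuous_fst).sub continuous_const)
    exact (hs1.continuousOn.smul h1).add (hs2.continuousOn.smul h2)
  have hmc : Continuous m := by
    simp only [hmdef]
    exact continuous_const.max (continuous_const.min
      (((continuous_const.mul continuous_id).sub continuous_const).min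
        (continuous_const.sub (continuous_const.mul continuous_id))))
  have hGcont : ContinuousOn G (Set.Icc (0:ℝ) 1 ×ˢ E) := by
    apply hYcont.add
    exact ((hmc.comp continuous_fst).continuousOn).smul
      (hcorr_cont.comp_continuousOn hYcont)
  refine ⟨⟨Kg, hgl⟩, ?_, G, hGcont, hG0, hG1,
    fun t ht x hx => (master t ht x hx).1,
    fun t ht x hx => (master t ht x hx.1).2.1 hx.2,
    fun t ht x hx => (master t ht x hx.1).2.2.1 hx.2,
    Ktot, hKtc, hKtsub,
    fun t ht x hx => (master t ht x hx.1).2.2.2 hx.2⟩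
  intro x hx
  have hh := (master 1 h01 x hx).1
  rwa [hG1 x hx] at hh
end Paper
end
end

section
/- Grassmannian distance via restricted norms. Let 0 ≤ d ≤ n and let V, W ∈ G(d,n), the set of d-dimensional linear subspaces of ℝ^n. With ‖u‖_S := sup{|u(x)| : x ∈ S, |x| ≤ 1} for a subspace S of ℝ^n and a linear map u : ℝ^n → ℝ^n, the distance d(V,W) = ‖p_V − p_W‖ (operator norm of the difference of orthogonal projections) satisfies: d(V,W) = max{‖p_V − p_W‖_V, ‖p_V − p_W‖_{V^⊥}} = max{‖p_V − p_W‖_V, ‖p_V − p_W‖_W}. -/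
open MeasureTheory Metric Set Filter
open scoped ENNReal NNReal Topology BigOperators

noncomputable section

namespace Paper

open scoped RealInnerProductSpace

lemma opNormOn_nonneg {n : ℕ} (u : Vn n →L[ℝ] Vn n) (S : Set (Vn n)) :
    0 ≤ opNormOn u S :=
  Real.sSup_nonneg (by rintro _ ⟨x, -, rfl⟩; exact norm_nonneg _)

lemma opNormOn_le {n : ℕ} {u : Vn n →L[ℝ] Vn n} {S : Set (Vn n)} {C : ℝ} (hC : 0 ≤ C)
    (h : ∀ x ∈ S, ‖x‖ ≤ 1 → ‖u x‖ ≤ C) : opNormOn u S ≤ C :=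
  Real.sSup_le (by rintro _ ⟨x, ⟨hx, hx1⟩, rfl⟩; exact h x hx hx1) hC

lemma opNormOn_le_opNorm {n : ℕ} (u : Vn n →L[ℝ] Vn n) (S : Set (Vn n)) :
    opNormOn u S ≤ ‖u‖ :=
  opNormOn_le (norm_nonneg u) fun x _ hx1 =>
    (u.le_opNorm x).trans (by nlinarith [norm_nonneg u])

lemma bddAbove_opNormOn {n : ℕ} (u : Vn n →L[ℝ] Vn n) (S : Set (Vn n)) :
    BddAbove ((fun x => ‖u x‖) '' {x ∈ S | ‖x‖ ≤ 1}) := by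
  refine ⟨‖u‖, ?_⟩
  rintro _ ⟨x, ⟨-, hx1⟩, rfl⟩
  exact (u.le_opNorm x).trans (by nlinarith [norm_nonneg u])

lemma norm_apply_le_opNormOn {n : ℕ} (u : Vn n →L[ℝ] Vn n) (S : Submodule ℝ (Vn n))
    {x : Vn n} (hx : x ∈ S) : ‖u x‖ ≤ opNormOn u S * ‖x‖ := by
  rcases eq_or_ne x 0 with rfl | hx0
  · simp
  · have hxn : (0:ℝ) < ‖x‖ := norm_pos_iff.mpr hx0
    have hmem : ‖x‖⁻¹ • x ∈ S := S.smul_mem _ hx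
    have h1 : ‖‖x‖⁻¹ • x‖ ≤ 1 := by
      rw [norm_smul, Real.norm_eq_abs, abs_of_pos (inv_pos.mpr hxn),
        inv_mul_cancel₀ hxn.ne']
    have h2 : ‖u (‖x‖⁻¹ • x)‖ ≤ opNormOn u S :=
      le_csSup (bddAbove_opNormOn u S) ⟨_, ⟨hmem, h1⟩, rfl⟩
    have h3 : ‖u (‖x‖⁻¹ • x)‖ = ‖x‖⁻¹ * ‖u x‖ := by
      rw [u.map_smul, norm_smul, Real.norm_eq_abs, abs_of_pos (inv_pos.mpr hxn)]
    rw [h3] at h2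
    calc ‖u x‖ = (‖x‖⁻¹ * ‖u x‖) * ‖x‖ := by field_simp
      _ ≤ opNormOn u S * ‖x‖ := mul_le_mul_of_nonneg_right h2 hxn.le

lemma projL_apply_mem {n : ℕ} (W : Submodule ℝ (Vn n)) (x : Vn n) : projL W x ∈ W :=
  (W.orthogonalProjection x).2

lemma projL_eq_self {n : ℕ} (W : Submodule ℝ (Vn n)) {x : Vn n} (hx : x ∈ W) :
    projL W x = x := Submodule.starProjection_eq_self_iff.mpr hx

lemma projL_eq_zero {n : ℕ} (W : Submodule ℝ (Vn n)) {x : Vn n} (hx : x ∈ Wᗮ) :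
    projL W x = 0 := by
  show ((W.orthogonalProjectionOnto x : W) : Vn n) = 0
  rw [Submodule.orthogonalProjectionOnto_apply_of_mem_orthogonal hx]
  simp

lemma sub_projL_mem_orthogonal {n : ℕ} (W : Submodule ℝ (Vn n)) (x : Vn n) :
    x - projL W x ∈ Wᗮ := Submodule.sub_starProjection_mem_orthogonal x

/-- The main inequality: `‖p_V - p_W‖ ≤ max(‖·‖_V, ‖·‖_{V^⊥})`. -/
lemma opNorm_le_max {n : ℕ} (V W : Submodule ℝ (Vn n)) :
    ‖projL V - projL W‖ ≤
      max (opNormOn (projL V - projL W) (V : Set (Vn n)))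
          (opNormOn (projL V - projL W) (Vᗮ : Set (Vn n))) := by
  set u : Vn n →L[ℝ] Vn n := projL V - projL W with hu
  set M : ℝ := max (opNormOn u (V : Set (Vn n))) (opNormOn u (Vᗮ : Set (Vn n))) with hM
  have hM0 : 0 ≤ M := le_trans (opNormOn_nonneg u (V : Set (Vn n))) (le_max_left _ _)
  refine ContinuousLinearMap.opNorm_le_bound _ hM0 fun x => ?_
  set a : Vn n := projL V x with had
  set b : Vn n := x - a with hbd
  have ha : a ∈ V := projL_apply_mem V x
  have hb : b ∈ Vᗮ := sub_projL_mem_orthogonal V x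
  have hab : x = a + b := by rw [hbd]; abel
  have hua : u a = a - projL W a := by
    rw [hu]; simp [ContinuousLinearMap.sub_apply, projL_eq_self V ha]
  have hub : u b = -(projL W b) := by
    rw [hu]; simp [ContinuousLinearMap.sub_apply, projL_eq_zero V hb]
  have hinner : ⟪u a, u b⟫ = 0 := by
    rw [hua, hub, inner_neg_right,
      Submodule.inner_left_of_mem_orthogonal (projL_apply_mem W b)
        (sub_projL_mem_orthogonal W a), neg_zero]
  have habi : ⟪a, b⟫ = 0 := Submodule.inner_right_of_mem_orthogonal ha hb
  have hxsq : ‖x‖^2 = ‖a‖^2 + ‖b‖^2 := by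
    rw [hab, norm_add_sq_real, habi]; ring
  have husq : ‖u x‖^2 = ‖u a‖^2 + ‖u b‖^2 := by
    rw [hab, map_add, norm_add_sq_real, hinner]; ring
  have h1 : ‖u a‖ ≤ M * ‖a‖ :=
    (norm_apply_le_opNormOn u V ha).trans
      (mul_le_mul_of_nonneg_right (le_max_left _ _) (norm_nonneg _))
  have h2 : ‖u b‖ ≤ M * ‖b‖ :=
    (norm_apply_le_opNormOn u Vᗮ hb).trans
      (mul_le_mul_of_nonneg_right (le_max_right _ _) (norm_nonneg _))
  have p1 : ‖u a‖^2 ≤ (M * ‖a‖)^2 := pow_le_pow_left₀ (norm_nonneg _) h1 2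
  have p2 : ‖u b‖^2 ≤ (M * ‖b‖)^2 := pow_le_pow_left₀ (norm_nonneg _) h2 2
  have hsq : ‖u x‖^2 ≤ (M * ‖x‖)^2 := by
    calc ‖u x‖^2 = ‖u a‖^2 + ‖u b‖^2 := husq
      _ ≤ (M * ‖a‖)^2 + (M * ‖b‖)^2 := add_le_add p1 p2
      _ = M^2 * (‖a‖^2 + ‖b‖^2) := by ring
      _ = (M * ‖x‖)^2 := by rw [← hxsq]; ring
  exact le_of_pow_le_pow_left₀ two_ne_zero (mul_nonneg hM0 (norm_nonneg x)) hsq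

/-- Duality: `‖p_V - p_W‖_{V^⊥} = ‖p_V - p_W‖_W`. -/
lemma opNormOn_orthogonal_eq {n : ℕ} (V W : Submodule ℝ (Vn n)) :
    opNormOn (projL V - projL W) (Vᗮ : Set (Vn n)) =
      opNormOn (projL V - projL W) (W : Set (Vn n)) := by
  set u : Vn n →L[ℝ] Vn n := projL V - projL W with hu
  apply le_antisymm
  · refine opNormOn_le (opNormOn_nonneg u _) fun x hx hx1 => ?_
    have hux : u x = -(projL W x) := by
      rw [hu]; simp [ContinuousLinearMap.sub_apply, projL_eq_zero V hx]
    rw [hux, norm_neg]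
    set z : Vn n := projL W x with hz
    rcases eq_or_ne z 0 with h0 | h0
    · rw [h0, norm_zero]; exact opNormOn_nonneg u _
    have hzn : (0:ℝ) < ‖z‖ := norm_pos_iff.mpr h0
    have hzW : z ∈ W := projL_apply_mem W x
    have e1 : ‖z‖^2 = ⟪z, x⟫ := by
      have : ⟪z, x - z⟫ = 0 :=
        Submodule.inner_right_of_mem_orthogonal hzW (sub_projL_mem_orthogonal W x)
      have h := inner_sub_right (𝕜 := ℝ) z x z
      rw [this] at h
      rw [← real_inner_self_eq_norm_sq]
      linarith
    have e2 : ⟪z, x⟫ = ⟪z - projL V z, x⟫ := by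
      rw [inner_sub_left]
      have : ⟪projL V z, x⟫ = 0 :=
        Submodule.inner_right_of_mem_orthogonal (projL_apply_mem V z) hx
      linarith
    have e3 : z - projL V z = -(u z) := by
      rw [hu]; simp [ContinuousLinearMap.sub_apply, projL_eq_self W hzW]
    have e4 : ‖z‖^2 ≤ ‖u z‖ := by
      calc ‖z‖^2 = ⟪z - projL V z, x⟫ := by rw [e1, e2]
        _ ≤ ‖z - projL V z‖ * ‖x‖ := real_inner_le_norm _ _
        _ ≤ ‖z - projL V z‖ * 1 :=
            mul_le_mul_of_nonneg_left hx1 (norm_nonneg _)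
        _ = ‖u z‖ := by rw [mul_one, e3, norm_neg]
    have e5 : ‖u z‖ ≤ opNormOn u (W : Set (Vn n)) * ‖z‖ :=
      norm_apply_le_opNormOn u W hzW
    nlinarith
  · refine opNormOn_le (opNormOn_nonneg u _) fun y hy hy1 => ?_
    have huy : u y = -(y - projL V y) := by
      rw [hu]; simp [ContinuousLinearMap.sub_apply, projL_eq_self W hy]
    rw [huy, norm_neg]
    set z : Vn n := y - projL V y with hz
    rcases eq_or_ne z 0 with h0 | h0
    · rw [h0, norm_zero]; exact opNormOn_nonneg u _
    have hzn : (0:ℝ) < ‖z‖ := norm_pos_iff.mpr h0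
    have hzV : z ∈ Vᗮ := sub_projL_mem_orthogonal V y
    have e1 : ‖z‖^2 = ⟪z, y⟫ := by
      have hpv : ⟪z, projL V y⟫ = 0 :=
        Submodule.inner_left_of_mem_orthogonal (projL_apply_mem V y) hzV
      have h := inner_sub_right (𝕜 := ℝ) z y (projL V y)
      rw [hpv] at h
      rw [← real_inner_self_eq_norm_sq, hz]
      rw [hz] at h
      linarith
    have e2 : ⟪z, y⟫ = ⟪projL W z, y⟫ := by
      have h0' : ⟪z - projL W z, y⟫ = 0 :=
        Submodule.inner_left_of_mem_orthogonal hy (sub_projL_mem_orthogonal W z)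
      have h := inner_sub_left (𝕜 := ℝ) z (projL W z) y
      rw [h0'] at h
      linarith
    have e3 : projL W z = -(u z) := by
      rw [hu]; simp [ContinuousLinearMap.sub_apply, projL_eq_zero V hzV]
    have e4 : ‖z‖^2 ≤ ‖u z‖ := by
      calc ‖z‖^2 = ⟪projL W z, y⟫ := by rw [e1, e2]
        _ ≤ ‖projL W z‖ * ‖y‖ := real_inner_le_norm _ _
        _ ≤ ‖projL W z‖ * 1 :=
            mul_le_mul_of_nonneg_left hy1 (norm_nonneg _)
        _ = ‖u z‖ := by rw [mul_one, e3, norm_neg]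
    have e5 : ‖u z‖ ≤ opNormOn u (Vᗮ : Set (Vn n)) * ‖z‖ :=
      norm_apply_le_opNormOn u Vᗮ hzV
    nlinarith

/-- **Grassmannian distance via restricted norms.** -/
theorem grassmannian_dist_restricted (n d : ℕ) (hdn : d ≤ n)
    (V W : Submodule ℝ (Vn n))
    (hV : Module.finrank ℝ V = d) (hW : Module.finrank ℝ W = d) :
    ‖projL V - projL W‖ =
      max (opNormOn (projL V - projL W) (V : Set (Vn n)))
          (opNormOn (projL V - projL W) (Vᗮ : Set (Vn n))) ∧
    ‖projL V - projL W‖ =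
      max (opNormOn (projL V - projL W) (V : Set (Vn n)))
          (opNormOn (projL V - projL W) (W : Set (Vn n))) := by
  have h1 : ‖projL V - projL W‖ =
      max (opNormOn (projL V - projL W) (V : Set (Vn n)))
          (opNormOn (projL V - projL W) (Vᗮ : Set (Vn n))) :=
    le_antisymm (opNorm_le_max V W)
      (max_le (opNormOn_le_opNorm _ _) (opNormOn_le_opNorm _ _))
  exact ⟨h1, by rw [h1, opNormOn_orthogonal_eq V W]⟩
end Paper
end
end
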